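/- Let T > 0, λ ≥ 0, and let q : [0,T] → ℝ be continuously differentiable with q'(t) < 0 for all t ∈ [0,T]. Set S := sup_{t ∈ [0,T]} |q'(t)| (which is finite and positive). Then for every Borel set B ⊆ ℝ, ∫_0^T 1_B(q(t)) e^{−λ t} dt ≥ (e^{−λ T}/S) · Leb( B ∩ [q(T), q(0)] ), where Leb denotes Lebesgue measure. -/

import Mathlib

open MeasureTheory Set Filter

/-- the change-of-variables inequality from the petite-set lemma
(Lemma 4.2): occupation of a Borel set `B` by a strictly decreasing drift path,
weighted by `e^{−λt}`, is bounded below by a multiple of `Leb(B ∩ [q(T), q(0)])`. -/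
theorem occupation_time_lower_bound
    (T lam : ℝ) (hT : 0 < T) (hlam : 0 ≤ lam)
    (q q' : ℝ → ℝ)
    (hq_deriv : ∀ t ∈ Icc 0 T, HasDerivAt q (q' t) t)
    (hq'_cont : ContinuousOn q' (Icc 0 T))
    (hq'_neg : ∀ t ∈ Icc 0 T, q' t < 0)
    (B : Set ℝ) (hB : MeasurableSet B) :
    (Real.exp (-lam * T) / sSup ((fun t => |q' t|) '' Icc 0 T))
        * (volume (B ∩ Icc (q T) (q 0))).toReal
      ≤ ∫ t in (0 : ℝ)..T, B.indicator (fun _ => (1 : ℝ)) (q t) * Real.exp (-lam * t) := by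
  set S := sSup ((fun t => |q' t|) '' Icc 0 T) with hSdef
  have hIccC : IsCompact (Icc (0:ℝ) T) := isCompact_Icc
  have hne : (Icc (0:ℝ) T).Nonempty := ⟨0, le_refl 0, hT.le⟩
  have habs : ContinuousOn (fun t => |q' t|) (Icc 0 T) := hq'_cont.abs
  have himgC : IsCompact ((fun t => |q' t|) '' Icc 0 T) := hIccC.image_of_continuousOn habs
  have hbdd : BddAbove ((fun t => |q' t|) '' Icc 0 T) := himgC.bddAbove
  have hle : ∀ t ∈ Icc (0:ℝ) T, |q' t| ≤ S := fun t ht => le_csSup hbdd ⟨t, ht, rfl⟩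
  have hSmem : S ∈ (fun t => |q' t|) '' Icc 0 T :=
    himgC.sSup_mem (hne.image _)
  have hSpos : 0 < S := by
    obtain ⟨t0, ht0, hEq⟩ := hSmem
    rw [← hEq]
    exact abs_pos.2 (ne_of_lt (hq'_neg t0 ht0))
  have qcont : ContinuousOn q (Icc 0 T) := fun t ht =>
    (hq_deriv t ht).continuousAt.continuousWithinAt
  -- strict antitonicity, injectivity
  have hanti : StrictAntiOn q (Icc 0 T) := by
    apply strictAntiOn_of_deriv_neg (convex_Icc 0 T) qcont
    intro x hx
    rw [interior_Icc] at hx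
    have hx' : x ∈ Icc (0:ℝ) T := Ioo_subset_Icc_self hx
    rw [(hq_deriv x hx').deriv]
    exact hq'_neg x hx'
  have hinj : InjOn q (Icc 0 T) := hanti.injOn
  -- image of the path
  have himg : q '' Icc 0 T = Icc (q T) (q 0) := by
    apply Subset.antisymm
    · rintro _ ⟨t, ht, rfl⟩
      constructor
      · rcases eq_or_lt_of_le ht.2 with h | h
        · rw [h]
        · exact (hanti ht (right_mem_Icc.2 hT.le) h).le
      · rcases eq_or_lt_of_le ht.1 with h | h
        · rw [← h]
        · exact (hanti (left_mem_Icc.2 hT.le) ht h).le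
    · exact intermediate_value_Icc' hT.le qcont
  -- change of variables
  have hcov : ∫ x in q '' Icc 0 T, B.indicator (fun _ => (1:ℝ)) x
      = ∫ x in Icc 0 T, |q' x| • B.indicator (fun _ => (1:ℝ)) (q x) :=
    integral_image_eq_integral_abs_deriv_smul measurableSet_Icc
      (fun x hx => (hq_deriv x hx).hasDerivWithinAt) hinj _
  have hvol : (volume (B ∩ Icc (q T) (q 0))).toReal
      = ∫ x in Icc 0 T, |q' x| * B.indicator (fun _ => (1:ℝ)) (q x) := by
    have : ∫ x in q '' Icc 0 T, B.indicator (fun _ => (1:ℝ)) x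
        = (volume (B ∩ Icc (q T) (q 0))).toReal := by
      rw [himg, setIntegral_indicator hB, inter_comm]
      simp [setIntegral_const]
      rfl
    rw [← this, hcov]
    simp [smul_eq_mul]
  -- measurability facts
  have hqm : AEMeasurable q (volume.restrict (Icc 0 T)) :=
    qcont.aemeasurable measurableSet_Icc
  have hindm : AEStronglyMeasurable (fun x => B.indicator (fun _ => (1:ℝ)) (q x))
      (volume.restrict (Icc 0 T)) :=
    ((measurable_const.indicator hB).comp_aemeasurable hqm).aestronglyMeasurable
  have hind01 : ∀ x, 0 ≤ B.indicator (fun _ => (1:ℝ)) (q x)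
      ∧ B.indicator (fun _ => (1:ℝ)) (q x) ≤ 1 := by
    intro x
    by_cases h : q x ∈ B <;> simp [h]
  -- integrability of both integrands on Icc 0 T
  have hconst : Integrable (fun _ : ℝ => S) (volume.restrict (Icc 0 T)) :=
    integrable_const _
  have h1int : IntegrableOn (fun x => |q' x| * B.indicator (fun _ => (1:ℝ)) (q x))
      (Icc 0 T) volume := by
    refine Integrable.mono' hconst
      (((habs.aestronglyMeasurable measurableSet_Icc)).mul hindm) ?_
    filter_upwards [ae_restrict_mem measurableSet_Icc] with x hx
    have h0 := (hind01 x).1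
    have h1 := (hind01 x).2
    have : |q' x| * B.indicator (fun _ => (1:ℝ)) (q x) ≤ S * 1 := by
      apply mul_le_mul (hle x hx) h1 h0 hSpos.le
    rw [Real.norm_eq_abs, abs_of_nonneg (mul_nonneg (abs_nonneg _) h0)]
    linarith
  have h2int : IntegrableOn (fun x => B.indicator (fun _ => (1:ℝ)) (q x) * Real.exp (-lam * x))
      (Icc 0 T) volume := by
    refine Integrable.mono' (integrable_const (1:ℝ))
      (hindm.mul (Real.continuous_exp.comp (continuous_const.mul continuous_id)).aestronglyMeasurable) ?_
    filter_upwards [ae_restrict_mem measurableSet_Icc] with x hx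
    have h0 := (hind01 x).1
    have h1 := (hind01 x).2
    have he : Real.exp (-lam * x) ≤ 1 := by
      rw [← Real.exp_zero]
      apply Real.exp_le_exp.2
      have : 0 ≤ lam * x := mul_nonneg hlam hx.1
      linarith
    have : B.indicator (fun _ => (1:ℝ)) (q x) * Real.exp (-lam * x) ≤ 1 * 1 :=
      mul_le_mul h1 he (Real.exp_pos _).le zero_le_one
    have hnn : 0 ≤ B.indicator (fun _ => (1:ℝ)) (q x) * Real.exp (-lam * x) :=
      mul_nonneg h0 (Real.exp_pos _).le
    rw [Real.norm_eq_abs, abs_of_nonneg hnn]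
    linarith
  -- main comparison
  have hmain : ∫ x in Icc 0 T, (Real.exp (-lam * T) / S)
        * (|q' x| * B.indicator (fun _ => (1:ℝ)) (q x))
      ≤ ∫ x in Icc 0 T, B.indicator (fun _ => (1:ℝ)) (q x) * Real.exp (-lam * x) := by
    apply setIntegral_mono_on (h1int.const_mul _) h2int measurableSet_Icc
    intro x hx
    by_cases h : q x ∈ B
    · simp only [indicator_of_mem h, mul_one, one_mul]
      have step1 : Real.exp (-lam * T) / S * |q' x| ≤ Real.exp (-lam * T) := by
        rw [div_mul_eq_mul_div, div_le_iff₀ hSpos]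
        exact mul_le_mul_of_nonneg_left (hle x hx) (Real.exp_pos _).le
      have step2 : Real.exp (-lam * T) ≤ Real.exp (-lam * x) := by
        apply Real.exp_le_exp.2
        have : lam * x ≤ lam * T := mul_le_mul_of_nonneg_left hx.2 hlam
        linarith
      linarith
    · simp [indicator_of_notMem h]
  -- assemble
  rw [hvol, ← integral_const_mul]
  calc ∫ x in Icc 0 T, (Real.exp (-lam * T) / S)
        * (|q' x| * B.indicator (fun _ => (1:ℝ)) (q x))
      ≤ ∫ x in Icc 0 T, B.indicator (fun _ => (1:ℝ)) (q x) * Real.exp (-lam * x) := hmain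
    _ = ∫ t in (0:ℝ)..T, B.indicator (fun _ => (1:ℝ)) (q t) * Real.exp (-lam * t) := by
        rw [intervalIntegral.integral_of_le hT.le, integral_Icc_eq_integral_Ioc]
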